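/- Let c be the minimal integer such that every finite graph containing a spanning double tree has a c-balanced decomposition into two connected spanning subgraphs. Then every countably infinite graph G containing a spanning double tree admits a partition of its edges into two spanning subgraphs S1 and S2 such that S1 and S2 are semiconnected in G, and for every vertex v either both d_{S1}(v) and d_{S2}(v) are infinite or |d_{S1}(v) - d_{S2}(v)| ≤ c. -/

import Mathlib

/-- A multigraph without loops: edges `E` with an endpoint map into unordered
pairs of vertices, no edge being a loop. -/
structure Multigraph (V : Type*) (E : Type*) where
  ends : E → Sym2 V
  loopless : ∀ e, ¬ (ends e).IsDiag

namespace Multigraph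

variable {V E : Type*}

/-- `a` and `b` are joined by an edge belonging to the edge set `S`. -/
def Adj (G : Multigraph V E) (S : Set E) (a b : V) : Prop :=
  ∃ e ∈ S, G.ends e = s(a, b)

/-- Reachability in the spanning subgraph with edge set `S`. -/
def Reachable (G : Multigraph V E) (S : Set E) (a b : V) : Prop :=
  Relation.ReflTransGen (G.Adj S) a b

/-- The spanning subgraph with edge set `S` is connected. -/
def Connected (G : Multigraph V E) (S : Set E) : Prop :=
  ∀ a b : V, G.Reachable S a b

/-- The spanning subgraph with edge set `S` is acyclic: every edge of `S`
is a bridge of `S`. -/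
def Acyclic (G : Multigraph V E) (S : Set E) : Prop :=
  ∀ e ∈ S, ∀ a b : V, G.ends e = s(a, b) → ¬ G.Reachable (S \ {e}) a b

/-- `S` is the edge set of a spanning tree: connected and acyclic. -/
def IsSpanningTree (G : Multigraph V E) (S : Set E) : Prop :=
  G.Connected S ∧ G.Acyclic S

/-- The edges of `S` incident to `v`. -/
def incEdges (G : Multigraph V E) (S : Set E) (v : V) : Set E :=
  {e ∈ S | v ∈ G.ends e}

/-- The degree of `v` in the spanning subgraph with edge set `S`. -/
noncomputable def deg (G : Multigraph V E) (S : Set E) (v : V) : ℕ :=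
  (G.incEdges S v).ncard

/-- `T1, T2` form a double tree decomposition of `G`: they partition the
edges of `G` and are both spanning trees. -/
def IsDTD (G : Multigraph V E) (T1 T2 : Set E) : Prop :=
  T1 ∪ T2 = Set.univ ∧ Disjoint T1 T2 ∧ G.IsSpanningTree T1 ∧ G.IsSpanningTree T2

/-- `G` is a double tree: the edge-disjoint union of two spanning trees. -/
def IsDoubleTree (G : Multigraph V E) : Prop :=
  ∃ T1 T2, G.IsDTD T1 T2

/-- A decomposition into two spanning subgraphs is `c`-balanced if at each
vertex the two degrees differ by at most `c`. -/
def Balanced (G : Multigraph V E) (c : ℕ) (S1 S2 : Set E) : Prop :=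
  ∀ v : V, |(G.deg S1 v : ℤ) - (G.deg S2 v : ℤ)| ≤ (c : ℤ)

end Multigraph

namespace Multigraph

variable {V E : Type*}

/-- The edges of `G` crossing the vertex cut `(A, Aᶜ)`. -/
def CrossEdges (G : Multigraph V E) (A : Set V) : Set E :=
  {e | ∃ a ∈ A, ∃ b ∈ Aᶜ, G.ends e = s(a, b)}

/-- The spanning subgraph with edge set `S` is semiconnected in `G`:
it contains an edge of every finite cut of `G`. -/
def Semiconnected (G : Multigraph V E) (S : Set E) : Prop :=
  ∀ A : Set V, A.Nonempty → Aᶜ.Nonempty → (G.CrossEdges A).Finite →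
    (S ∩ G.CrossEdges A).Nonempty

/-- At every vertex, either both degrees are infinite, or both are finite and
differ by at most `c`. -/
def BalancedOrInfinite (G : Multigraph V E) (c : ℕ) (S1 S2 : Set E) : Prop :=
  ∀ v : V,
    ((G.incEdges S1 v).Infinite ∧ (G.incEdges S2 v).Infinite) ∨
    ((G.incEdges S1 v).Finite ∧ (G.incEdges S2 v).Finite ∧
      |(G.deg S1 v : ℤ) - (G.deg S2 v : ℤ)| ≤ (c : ℤ))

end Multigraph

/-- Every finite graph containing two edge-disjoint spanning trees has a
`c`-balanced decomposition into two connected spanning subgraphs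
(finite multigraphs are represented up to isomorphism on `Fin n`, `Fin m`). -/
def FinContainsDoubleTreeBalanced (c : ℕ) : Prop :=
  ∀ (n m : ℕ) (G : Multigraph (Fin n) (Fin m)),
    (∃ T1 T2 : Set (Fin m), Disjoint T1 T2 ∧ G.IsSpanningTree T1 ∧ G.IsSpanningTree T2) →
    ∃ G1 G2 : Set (Fin m), G1 ∪ G2 = Set.univ ∧ Disjoint G1 G2 ∧
      G.Connected G1 ∧ G.Connected G2 ∧ G.Balanced c G1 G2

section Basics

namespace Multigraph

variable {V E : Type*}

lemma adj_symm' (G : Multigraph V E) {S : Set E} {a b : V} (h : G.Adj S a b) : G.Adj S b a := by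
  obtain ⟨e, he, hee⟩ := h
  exact ⟨e, he, by rw [hee, Sym2.eq_swap]⟩

lemma reachable_symm (G : Multigraph V E) {S : Set E} {a b : V}
    (h : G.Reachable S a b) : G.Reachable S b a :=
  (@Relation.ReflTransGen.stdSymm _ _ ⟨fun _ _ hh => G.adj_symm' hh⟩).symm _ _ h

lemma reachable_mono (G : Multigraph V E) {S S' : Set E} (hSS : S ⊆ S') {a b : V}
    (h : G.Reachable S a b) : G.Reachable S' a b := by
  refine Relation.ReflTransGen.mono ?_ a b h
  rintro x y ⟨e, he, hee⟩
  exact ⟨e, hSS he, hee⟩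

lemma rel_equivalence (G : Multigraph V E) (S : Set E) :
    Equivalence (G.Reachable S) :=
  ⟨fun _ => Relation.ReflTransGen.refl, fun h => G.reachable_symm h,
    fun h h' => Relation.ReflTransGen.trans h h'⟩

/-- A connected spanning subgraph meets every nontrivial cut. -/
lemma connected_meets_cut (G : Multigraph V E) {S : Set E} (hS : G.Connected S)
    {A : Set V} (hA : A.Nonempty) (hA' : Aᶜ.Nonempty) :
    (S ∩ G.CrossEdges A).Nonempty := by
  obtain ⟨a, ha⟩ := hA
  obtain ⟨b, hb⟩ := hA'
  have h := hS a b
  have key : ∀ x, G.Reachable S a x → x ∈ A ∨ (S ∩ G.CrossEdges A).Nonempty := by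
    intro x hx
    induction hx with
    | refl => exact Or.inl ha
    | @tail m y hr hadj ih =>
      rcases ih with hm | hdone
      · obtain ⟨e, he, hee⟩ := hadj
        by_cases hy : y ∈ A
        · exact Or.inl hy
        · exact Or.inr ⟨e, he, ⟨m, hm, y, hy, hee⟩⟩
      · exact Or.inr hdone
  rcases key b h with hbA | hdone
  · exact absurd hbA hb
  · exact hdone

/-- If no edge of `S` crosses `A`, then `S`-reachability respects `A`. -/
lemma reachable_respects (G : Multigraph V E) {S : Set E} {A : Set V}
    (hcross : ∀ e ∈ S, e ∉ G.CrossEdges A) {v w : V}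
    (h : G.Reachable S v w) : (v ∈ A ↔ w ∈ A) := by
  induction h with
  | refl => rfl
  | @tail m y hr hadj ih =>
    obtain ⟨e, he, hee⟩ := hadj
    have step : m ∈ A ↔ y ∈ A := by
      constructor
      · intro hm
        by_contra hy
        exact hcross e he ⟨m, hm, y, hy, hee⟩
      · intro hy
        by_contra hm
        exact hcross e he ⟨y, hy, m, hm, by rw [hee, Sym2.eq_swap]⟩
    exact ih.trans step

/-- Splitting a walk at the first edge of `F`. -/
lemma reach_split (G : Multigraph V E) (F : Set E) {x y : V}
    (h : G.Reachable Set.univ x y) :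
    G.Reachable Fᶜ x y ∨ ∃ z e, G.Reachable Fᶜ x z ∧ e ∈ F ∧ z ∈ G.ends e := by
  induction h with
  | refl => exact Or.inl Relation.ReflTransGen.refl
  | @tail m y hr hadj ih =>
    rcases ih with hreach | hdone
    · obtain ⟨e, _, hee⟩ := hadj
      by_cases heF : e ∈ F
      · exact Or.inr ⟨m, e, hreach, heF, by rw [hee]; exact Sym2.mem_mk_left m y⟩
      · exact Or.inl (hreach.tail ⟨e, heF, hee⟩)
    · exact Or.inr hdone

end Multigraph

end Basics
section TreeExtraction

namespace Multigraph

variable {V E : Type*}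

/-- Removing a non-bridge edge preserves connectivity. -/
lemma connected_remove_nonbridge (G : Multigraph V E) {S : Set E} {e : E} {a b : V}
    (hee : G.ends e = s(a, b)) (hab : G.Reachable (S \ {e}) a b)
    (hS : G.Connected S) : G.Connected (S \ {e}) := by
  intro x y
  have h := hS x y
  induction h with
  | refl => exact Relation.ReflTransGen.refl
  | @tail m z hr hadj ih =>
    obtain ⟨f, hf, hfe⟩ := hadj
    by_cases hfeq : f = e
    · subst hfeq
      have : s(a, b) = s(m, z) := by rw [← hee, hfe]
      rcases Sym2.eq_iff.mp this with ⟨h1, h2⟩ | ⟨h1, h2⟩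
      · subst h1; subst h2; exact ih.trans hab
      · subst h1; subst h2; exact ih.trans (G.reachable_symm hab)
    · exact ih.tail ⟨f, ⟨hf, hfeq⟩, hfe⟩

lemma exists_spanning_tree_aux (G : Multigraph V E) [Finite E] :
    ∀ (k : ℕ) (S : Set E), S.ncard ≤ k → G.Connected S →
      ∃ T, T ⊆ S ∧ G.IsSpanningTree T := by
  intro k
  induction k with
  | zero =>
    intro S hcard hconn
    refine ⟨S, subset_refl _, hconn, ?_⟩
    have : S = ∅ := by
      rw [← Set.ncard_eq_zero (Set.toFinite S)]
      omega
    intro e he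
    rw [this] at he
    exact absurd he (Set.notMem_empty e)
  | succ k ih =>
    intro S hcard hconn
    by_cases hacy : G.Acyclic S
    · exact ⟨S, subset_refl _, hconn, hacy⟩
    · simp only [Acyclic, not_forall] at hacy
      obtain ⟨e, he, a, b, hee, hab⟩ := hacy
      rw [not_not] at hab
      have hconn' : G.Connected (S \ {e}) := G.connected_remove_nonbridge hee hab hconn
      have hlt : (S \ {e}).ncard ≤ k := by
        have := Set.ncard_diff_singleton_lt_of_mem he (Set.toFinite S)
        omega
      obtain ⟨T, hTS, hT⟩ := ih (S \ {e}) hlt hconn'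
      exact ⟨T, hTS.trans Set.diff_subset, hT⟩

lemma exists_spanning_tree (G : Multigraph V E) [Finite E] {S : Set E}
    (hconn : G.Connected S) : ∃ T, T ⊆ S ∧ G.IsSpanningTree T :=
  G.exists_spanning_tree_aux S.ncard S le_rfl hconn

end Multigraph

end TreeExtraction
section Stage

namespace Multigraph

variable {V E : Type*} (G : Multigraph V E) (F : Set E)

/-- The relation of being connected avoiding edges of `F`. -/
def StageRel (v w : V) : Prop := G.Reachable Fᶜ v w

/-- The quotient of the vertex set by contracting all edges outside `F`. -/
def StageQ := Quot (G.StageRel F)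

def qmk : V → G.StageQ F := Quot.mk _

lemma qmk_surjective : Function.Surjective (G.qmk F) :=
  fun q => Quot.exists_rep q

lemma qmk_eq_iff {v w : V} : G.qmk F v = G.qmk F w ↔ G.StageRel F v w := by
  constructor
  · intro h
    exact ((G.rel_equivalence Fᶜ).eqvGen_iff).mp (Quot.eq.mp h)
  · exact Quot.sound

/-- The quotient endpoint map. -/
def qends (e : E) : Sym2 (G.StageQ F) := (G.ends e).map (G.qmk F)

/-- The set of edges of `F` that do not become loops in the quotient. -/
def StageNL : Set E := {e ∈ F | ¬ (G.qends F e).IsDiag}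

lemma finite_mem_sym2 {W : Type*} (z : Sym2 W) : {v | v ∈ z}.Finite := by
  induction z using Sym2.ind with
  | _ x y =>
    have : {v | v ∈ s(x, y)} ⊆ {x, y} := by
      intro v hv
      rcases Sym2.mem_iff.mp hv with h | h
      · exact Or.inl h
      · exact Or.inr h
    exact (Set.toFinite ({x, y} : Set W)).subset this

lemma stage_finite_q (hconn : G.Connected Set.univ) (hF : F.Finite) :
    Finite (G.StageQ F) := by
  classical
  set W : Set V := {v | ∃ e ∈ F, v ∈ G.ends e} with hWdef
  have hW : W.Finite := by
    have : W = ⋃ e ∈ F, {v | v ∈ G.ends e} := by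
      ext v; simp [hWdef]
    rw [this]
    exact hF.biUnion (fun e _ => Multigraph.finite_mem_sym2 (G.ends e))
  have : Finite ↥W := hW.to_subtype
  have hresp : ∀ (v v' : V), G.StageRel F v v' →
      {w : ↥W | G.StageRel F w.1 v} = {w : ↥W | G.StageRel F w.1 v'} := by
    intro v v' hvv'
    ext w
    constructor
    · intro hw
      exact Relation.ReflTransGen.trans hw hvv'
    · intro hw
      exact Relation.ReflTransGen.trans hw (G.reachable_symm hvv')
  let φ : G.StageQ F → Set ↥W := Quot.lift (fun v => {w : ↥W | G.StageRel F w.1 v}) hresp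
  have hinj : Function.Injective φ := by
    intro q1 q2 heq
    obtain ⟨v, rfl⟩ := G.qmk_surjective F q1
    obtain ⟨w, rfl⟩ := G.qmk_surjective F q2
    have heq' : {x : ↥W | G.StageRel F x.1 v} = {x : ↥W | G.StageRel F x.1 w} := heq
    by_cases hne : {x : ↥W | G.StageRel F x.1 v}.Nonempty
    · obtain ⟨z, hz⟩ := hne
      have hz' : G.StageRel F z.1 w := by
        rw [heq'] at hz
        exact hz
      exact (G.qmk_eq_iff F).mpr (Relation.ReflTransGen.trans (G.reachable_symm hz) hz')
    · -- both classes miss `W`; use connectivity and `reach_split`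
      rcases G.reach_split F (hconn v w) with hvw | ⟨z, e, hvz, heF, hz⟩
      · exact (G.qmk_eq_iff F).mpr hvw
      · exfalso
        apply hne
        exact ⟨⟨z, ⟨e, heF, hz⟩⟩, G.reachable_symm hvz⟩
  exact Finite.of_injective φ hinj

end Multigraph

end Stage
section Helpers

lemma sym2_exists_rep {W : Type*} (z : Sym2 W) : ∃ x y, z = s(x, y) := by
  induction z using Sym2.ind with
  | _ x y => exact ⟨x, y, rfl⟩

lemma sym2_exists_other {W : Type*} {v : W} {z : Sym2 W} (h : v ∈ z) :
    ∃ w, z = s(v, w) := by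
  obtain ⟨x, y, rfl⟩ := sym2_exists_rep z
  rcases Sym2.mem_iff.mp h with rfl | rfl
  · exact ⟨y, rfl⟩
  · exact ⟨x, Sym2.eq_swap.symm⟩

lemma sym2_isDiag_of_map {W W' : Type*} {g : W → W'} (hg : Function.Injective g)
    {z : Sym2 W} (h : (Sym2.map g z).IsDiag) : z.IsDiag := by
  obtain ⟨x, y, rfl⟩ := sym2_exists_rep z
  rw [Sym2.map_pair_eq, Sym2.mk_isDiag_iff] at h
  rw [Sym2.mk_isDiag_iff]
  exact hg h

end Helpers
section StageColoring

namespace Multigraph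

variable {V E : Type*}

lemma stage_coloring (G : Multigraph V E) {c : ℕ}
    (hfin : FinContainsDoubleTreeBalanced c)
    (hconn : G.Connected Set.univ)
    {C1 C2 : Set E} (hd : Disjoint C1 C2) (h1 : G.Connected C1) (h2 : G.Connected C2)
    (F : Set E) (hF : F.Finite) :
    ∃ χ : E → Bool,
      (∀ A : Set V, A.Nonempty → Aᶜ.Nonempty → G.CrossEdges A ⊆ F →
        (∃ e ∈ G.CrossEdges A, χ e = true) ∧ (∃ e ∈ G.CrossEdges A, χ e = false)) ∧
      (∀ v : V, G.incEdges Set.univ v ⊆ F →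
        |({e | e ∈ G.incEdges Set.univ v ∧ χ e = true}.ncard : ℤ) -
         ({e | e ∈ G.incEdges Set.univ v ∧ χ e = false}.ncard : ℤ)| ≤ (c : ℤ)) := by
  classical
  have hQfin : Finite (G.StageQ F) := G.stage_finite_q F hconn hF
  obtain ⟨N, ⟨eQ⟩⟩ := Finite.exists_equiv_fin (G.StageQ F)
  have hNLfin : (G.StageNL F).Finite := hF.subset (fun e he => he.1)
  have : Finite ↥(G.StageNL F) := hNLfin.to_subtype
  obtain ⟨M, ⟨eNL⟩⟩ := Finite.exists_equiv_fin ↥(G.StageNL F)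
  set H : Multigraph (Fin N) (Fin M) :=
    ⟨fun f => ((G.qends F (eNL.symm f).1).map eQ), by
      intro f hdiag
      exact (eNL.symm f).2.2 (sym2_isDiag_of_map eQ.injective hdiag)⟩ with hHdef
  have hHends : ∀ (e : E) (he : e ∈ G.StageNL F) (x y : V), G.ends e = s(x, y) →
      H.ends (eNL ⟨e, he⟩) = s(eQ (G.qmk F x), eQ (G.qmk F y)) := by
    intro e he x y hxy
    show ((G.qends F (eNL.symm (eNL ⟨e, he⟩)).1).map eQ) = _
    rw [Equiv.symm_apply_apply]
    show ((G.ends e).map (G.qmk F)).map eQ = _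
    rw [hxy, Sym2.map_pair_eq, Sym2.map_pair_eq]
  have himg : ∀ (C : Set E), G.Connected C → H.Connected {f | (eNL.symm f).1 ∈ C} := by
    intro C hC
    have claim : ∀ v w : V, G.Reachable C v w →
        H.Reachable {f | (eNL.symm f).1 ∈ C} (eQ (G.qmk F v)) (eQ (G.qmk F w)) := by
      intro v w h
      induction h with
      | refl => exact Relation.ReflTransGen.refl
      | @tail m y hr hadj ih =>
        obtain ⟨e, heC, hee⟩ := hadj
        by_cases heF : e ∈ F
        · by_cases hdiag : (G.qends F e).IsDiag
          · have hq : G.qmk F m = G.qmk F y := by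
              have hq2 : G.qends F e = s(G.qmk F m, G.qmk F y) := by
                show (G.ends e).map (G.qmk F) = _
                rw [hee, Sym2.map_pair_eq]
              rw [hq2, Sym2.mk_isDiag_iff] at hdiag
              exact hdiag
            rwa [← hq]
          · have heNL : e ∈ G.StageNL F := ⟨heF, hdiag⟩
            refine ih.tail ⟨eNL ⟨e, heNL⟩, ?_, hHends e heNL m y hee⟩
            show (eNL.symm (eNL ⟨e, heNL⟩)).1 ∈ C
            rw [Equiv.symm_apply_apply]
            exact heC
        · have hq : G.qmk F m = G.qmk F y :=
            (G.qmk_eq_iff F).mpr (Relation.ReflTransGen.single ⟨e, heF, hee⟩)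
          rwa [← hq]
    intro p q
    obtain ⟨v, hv⟩ := G.qmk_surjective F (eQ.symm p)
    obtain ⟨w, hw⟩ := G.qmk_surjective F (eQ.symm q)
    have hp : eQ (G.qmk F v) = p := by rw [hv, Equiv.apply_symm_apply]
    have hq : eQ (G.qmk F w) = q := by rw [hw, Equiv.apply_symm_apply]
    rw [← hp, ← hq]
    exact claim v w (hC v w)
  obtain ⟨T1, hT1s, hT1⟩ := H.exists_spanning_tree (himg C1 h1)
  obtain ⟨T2, hT2s, hT2⟩ := H.exists_spanning_tree (himg C2 h2)
  have hdisj : Disjoint T1 T2 := by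
    rw [Set.disjoint_left]
    intro f hf1 hf2
    exact (Set.disjoint_left.mp hd) (hT1s hf1) (hT2s hf2)
  obtain ⟨G1, G2, hun, hdis, hg1, hg2, hbal⟩ := hfin N M H ⟨T1, T2, hdisj, hT1, hT2⟩
  set χ : E → Bool := fun e => if h : e ∈ G.StageNL F then
      (if eNL ⟨e, h⟩ ∈ G1 then true else false) else true with hχdef
  have hχtrue : ∀ (e : E) (he : e ∈ G.StageNL F), (χ e = true ↔ eNL ⟨e, he⟩ ∈ G1) := by
    intro e he
    simp only [hχdef, dif_pos he]
    by_cases h : eNL ⟨e, he⟩ ∈ G1 <;> simp [h]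
  have hG2iff : ∀ f : Fin M, f ∈ G2 ↔ f ∉ G1 := by
    intro f
    constructor
    · intro h2' h1'
      exact (Set.disjoint_left.mp hdis) h1' h2'
    · intro h1'
      have hmem : f ∈ G1 ∪ G2 := by rw [hun]; trivial
      rcases hmem with h | h
      · exact absurd h h1'
      · exact h
  have hχfalse : ∀ (e : E) (he : e ∈ G.StageNL F), (χ e = false ↔ eNL ⟨e, he⟩ ∈ G2) := by
    intro e he
    rw [hG2iff, ← hχtrue e he]
    cases hce : χ e <;> simp
  refine ⟨χ, ?_, ?_⟩
  · -- cut property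
    intro A hA hA' hKF
    have hres : ∀ v w : V, G.StageRel F v w → (v ∈ A ↔ w ∈ A) := by
      intro v w h
      exact G.reachable_respects (fun e he hcr => (Set.mem_compl_iff F e).mp he (hKF hcr)) h
    set Ab : Set (Fin N) := {p | ∃ a ∈ A, p = eQ (G.qmk F a)} with hAbdef
    have hmemA : ∀ x : V, eQ (G.qmk F x) ∈ Ab ↔ x ∈ A := by
      intro x
      constructor
      · rintro ⟨a, haA, heq⟩
        have hxa : G.qmk F x = G.qmk F a := eQ.injective heq
        exact (hres x a ((G.qmk_eq_iff F).mp hxa)).mpr haA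
      · intro hx
        exact ⟨x, hx, rfl⟩
    obtain ⟨a0, ha0⟩ := hA
    obtain ⟨b0, hb0⟩ := hA'
    have hAbne : Ab.Nonempty := ⟨eQ (G.qmk F a0), (hmemA a0).mpr ha0⟩
    have hAbcne : Abᶜ.Nonempty := ⟨eQ (G.qmk F b0), fun hmem => hb0 ((hmemA b0).mp hmem)⟩
    have extract : ∀ f : Fin M, f ∈ H.CrossEdges Ab → (eNL.symm f).1 ∈ G.CrossEdges A := by
      intro f hcr
      obtain ⟨p, hp, q, hq, hpq⟩ := hcr
      obtain ⟨x, y, hxy⟩ := sym2_exists_rep (G.ends (eNL.symm f).1)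
      have hHf : H.ends f = s(eQ (G.qmk F x), eQ (G.qmk F y)) := by
        have h0 := hHends (eNL.symm f).1 (eNL.symm f).2 x y hxy
        rwa [show (⟨(eNL.symm f).1, (eNL.symm f).2⟩ : ↥(G.StageNL F)) = eNL.symm f from rfl,
          Equiv.apply_symm_apply] at h0
      rw [hpq] at hHf
      rcases Sym2.eq_iff.mp hHf.symm with ⟨h1', h2'⟩ | ⟨h1', h2'⟩
      · have hx : x ∈ A := (hmemA x).mp (h1' ▸ hp)
        have hy : y ∉ A := fun hyA => (h2' ▸ hq) ((hmemA y).mpr hyA)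
        exact ⟨x, hx, y, hy, hxy⟩
      · have hy : y ∈ A := (h2' ▸ (hmemA y)).mp (h2' ▸ hp)
        have hx : x ∉ A := fun hxA => (h1' ▸ hq) ((hmemA x).mpr hxA)
        exact ⟨y, hy, x, hx, by rw [hxy, Sym2.eq_swap]⟩
    constructor
    · obtain ⟨f, hfG1, hcross⟩ := H.connected_meets_cut hg1 hAbne hAbcne
      refine ⟨(eNL.symm f).1, extract f hcross, ?_⟩
      rw [hχtrue _ (eNL.symm f).2]
      rwa [show eNL ⟨(eNL.symm f).1, (eNL.symm f).2⟩ = f from by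
        rw [show (⟨(eNL.symm f).1, (eNL.symm f).2⟩ : ↥(G.StageNL F)) = eNL.symm f from rfl,
          Equiv.apply_symm_apply]]
    · obtain ⟨f, hfG2, hcross⟩ := H.connected_meets_cut hg2 hAbne hAbcne
      refine ⟨(eNL.symm f).1, extract f hcross, ?_⟩
      rw [hχfalse _ (eNL.symm f).2]
      rwa [show eNL ⟨(eNL.symm f).1, (eNL.symm f).2⟩ = f from by
        rw [show (⟨(eNL.symm f).1, (eNL.symm f).2⟩ : ↥(G.StageNL F)) = eNL.symm f from rfl,
          Equiv.apply_symm_apply]]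
  · -- degree property
    intro v hIF
    have hsing : ∀ w, G.StageRel F v w → v = w := by
      intro w h
      rcases h.cases_head with heq | ⟨b, hadj, _⟩
      · exact heq
      · obtain ⟨e, heF, hee⟩ := hadj
        exact absurd (hIF ⟨Set.mem_univ e, by rw [hee]; exact Sym2.mem_mk_left v b⟩) heF
    have main : ∀ (G' : Set (Fin M)) (b : Bool),
        (∀ (e : E) (he : e ∈ G.StageNL F), (χ e = b ↔ eNL ⟨e, he⟩ ∈ G')) →
        {e | e ∈ G.incEdges Set.univ v ∧ χ e = b}.ncard =
          (H.incEdges G' (eQ (G.qmk F v))).ncard := by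
      intro G' b hb
      have hNLmem : ∀ e, e ∈ G.incEdges Set.univ v → e ∈ G.StageNL F := by
        intro e heI
        refine ⟨hIF heI, ?_⟩
        obtain ⟨w, hw⟩ := sym2_exists_other heI.2
        intro hdiag
        have hq2 : G.qends F e = s(G.qmk F v, G.qmk F w) := by
          show (G.ends e).map (G.qmk F) = _
          rw [hw, Sym2.map_pair_eq]
        rw [hq2, Sym2.mk_isDiag_iff] at hdiag
        have hvw := hsing w ((G.qmk_eq_iff F).mp hdiag)
        apply G.loopless e
        rw [hw, Sym2.mk_isDiag_iff]
        exact hvw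
      have toMem : ∀ (e : E) (he : e ∈ G.incEdges Set.univ v) (hχe : χ e = b),
          eNL ⟨e, hNLmem e he⟩ ∈ H.incEdges G' (eQ (G.qmk F v)) := by
        intro e he hχe
        refine ⟨(hb e (hNLmem e he)).mp hχe, ?_⟩
        obtain ⟨w, hw⟩ := sym2_exists_other he.2
        rw [hHends e (hNLmem e he) v w hw]
        exact Sym2.mem_mk_left _ _
      have invMem : ∀ (f : Fin M), f ∈ H.incEdges G' (eQ (G.qmk F v)) →
          (eNL.symm f).1 ∈ G.incEdges Set.univ v ∧ χ (eNL.symm f).1 = b := by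
        intro f hf
        obtain ⟨hfG', hfx⟩ := hf
        obtain ⟨x, y, hxy⟩ := sym2_exists_rep (G.ends (eNL.symm f).1)
        have hHf : H.ends f = s(eQ (G.qmk F x), eQ (G.qmk F y)) := by
          have h0 := hHends (eNL.symm f).1 (eNL.symm f).2 x y hxy
          rwa [show (⟨(eNL.symm f).1, (eNL.symm f).2⟩ : ↥(G.StageNL F)) = eNL.symm f from rfl,
            Equiv.apply_symm_apply] at h0
        rw [hHf] at hfx
        have hvmem : v ∈ G.ends (eNL.symm f).1 := by
          rcases Sym2.mem_iff.mp hfx with heq | heq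
          · have hrel := (G.qmk_eq_iff F).mp (eQ.injective heq)
            rw [hxy, (hsing x hrel)]
            exact Sym2.mem_mk_left _ _
          · have hrel := (G.qmk_eq_iff F).mp (eQ.injective heq)
            rw [hxy, (hsing y hrel)]
            exact Sym2.mem_mk_right _ _
        refine ⟨⟨Set.mem_univ _, hvmem⟩, ?_⟩
        rw [hb _ (eNL.symm f).2]
        rwa [show eNL ⟨(eNL.symm f).1, (eNL.symm f).2⟩ = f from by
          rw [show (⟨(eNL.symm f).1, (eNL.symm f).2⟩ : ↥(G.StageNL F)) = eNL.symm f from rfl,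
            Equiv.apply_symm_apply]]
      rw [← Nat.card_coe_set_eq, ← Nat.card_coe_set_eq]
      refine Nat.card_congr ?_
      refine ⟨fun e => ⟨eNL ⟨e.1, hNLmem e.1 e.2.1⟩, toMem e.1 e.2.1 e.2.2⟩,
        fun f => ⟨(eNL.symm f.1).1, invMem f.1 f.2⟩, ?_, ?_⟩
      · intro e
        apply Subtype.ext
        show (eNL.symm (eNL ⟨e.1, _⟩)).1 = e.1
        rw [Equiv.symm_apply_apply]
      · intro f
        apply Subtype.ext
        show eNL ⟨(eNL.symm f.1).1, _⟩ = f.1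
        rw [show (⟨(eNL.symm f.1).1, hNLmem (eNL.symm f.1).1 (invMem f.1 f.2).1⟩ :
          ↥(G.StageNL F)) = eNL.symm f.1 from rfl, Equiv.apply_symm_apply]
    have e1 := main G1 true hχtrue
    have e2 := main G2 false hχfalse
    rw [e1, e2]
    exact hbal (eQ (G.qmk F v))

end Multigraph

end StageColoring
section LF

namespace Multigraph

lemma lf_main {V E : Type*} [Countable V] [Infinite V] [Countable E]
    (G : Multigraph V E) {c : ℕ}
    (hfin : FinContainsDoubleTreeBalanced c)
    (hloc : ∀ v : V, (G.incEdges Set.univ v).Finite)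
    {C1 C2 : Set E} (hd : Disjoint C1 C2)
    (h1 : G.Connected C1) (h2 : G.Connected C2) :
    ∃ S1 S2 : Set E, S1 ∪ S2 = Set.univ ∧ Disjoint S1 S2 ∧
      G.Semiconnected S1 ∧ G.Semiconnected S2 ∧
      (∀ v : V, (G.incEdges S1 v).Finite ∧ (G.incEdges S2 v).Finite ∧
        |(G.deg S1 v : ℤ) - (G.deg S2 v : ℤ)| ≤ (c : ℤ)) := by
  classical
  have hconn : G.Connected Set.univ := fun a b => G.reachable_mono (Set.subset_univ C1) (h1 a b)
  obtain ⟨encE, hencE⟩ := exists_injective_nat E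
  set F : ℕ → Set E := fun n => {e | encE e < n} with hFdef
  have hFfin : ∀ n, (F n).Finite := by
    intro n
    have heq : F n = encE ⁻¹' (Set.Iio n) := rfl
    rw [heq]
    exact Set.Finite.preimage hencE.injOn (Set.finite_Iio n)
  have hFcov : ∀ (K : Set E), K.Finite → ∃ n, ∀ m ≥ n, K ⊆ F m := by
    intro K hK
    obtain ⟨n, hn⟩ := (hK.image encE).bddAbove
    refine ⟨n + 1, fun m hm e he => ?_⟩
    have hle : encE e ≤ n := hn (Set.mem_image_of_mem encE he)
    simp only [hFdef, Set.mem_setOf_eq]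
    omega
  choose χs hcut hdeg using fun n => G.stage_coloring hfin hconn hd h1 h2 (F n) (hFfin n)
  set UU : Filter ℕ := (Filter.hyperfilter ℕ : Filter ℕ) with hUU
  have hUUne : UU.NeBot := Ultrafilter.neBot _
  set χ : E → Bool := fun e => if {n | χs n e = true} ∈ UU then true else false with hχdef
  have hagree : ∀ e : E, {n | χs n e = χ e} ∈ UU := by
    intro e
    by_cases h : {n | χs n e = true} ∈ UU
    · have hc : χ e = true := by simp [hχdef, h]
      rw [hc]; exact h
    · have hc : χ e = false := by simp [hχdef, h]
      rw [hc]
      have hcompl : {n | χs n e = true}ᶜ ∈ UU := by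
        rw [hUU]
        exact (Ultrafilter.compl_mem_iff_notMem).mpr h
      have heq : {n | χs n e = false} = {n | χs n e = true}ᶜ := by
        ext n
        simp only [Set.mem_setOf_eq, Set.mem_compl_iff]
        cases hh : χs n e <;> simp
      rw [heq]
      exact hcompl
  have hagreeW : ∀ (W : Set E), W.Finite → {n | ∀ e ∈ W, χs n e = χ e} ∈ UU := by
    intro W hW
    have heq : {n | ∀ e ∈ W, χs n e = χ e} = ⋂ e ∈ W, {n | χs n e = χ e} := by
      ext n; simp
    rw [heq]
    exact (Filter.biInter_mem hW).mpr (fun e _ => hagree e)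
  have hFU : ∀ (K : Set E), K.Finite → {n | K ⊆ F n} ∈ UU := by
    intro K hK
    obtain ⟨n0, hn0⟩ := hFcov K hK
    refine Filter.mem_of_superset ?_ (fun m hm => hn0 m hm)
    show {m | n0 ≤ m} ∈ UU
    rw [hUU]
    refine Filter.mem_hyperfilter_of_finite_compl ?_
    have heq : {m | n0 ≤ m}ᶜ = Set.Iio n0 := by
      ext m; simp [Set.mem_Iio]
    rw [heq]
    exact Set.finite_Iio n0
  set S1 : Set E := {e | χ e = true} with hS1
  set S2 : Set E := {e | χ e = false} with hS2
  have hS2c : S2 = S1ᶜ := by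
    ext e
    simp only [hS1, hS2, Set.mem_setOf_eq, Set.mem_compl_iff]
    cases h : χ e <;> simp
  refine ⟨S1, S2, ?_, ?_, ?_, ?_, ?_⟩
  · rw [hS2c]; exact Set.union_compl_self S1
  · rw [hS2c]; exact disjoint_compl_right
  · intro A hA hA' hKfin
    have hU1 : {n | G.CrossEdges A ⊆ F n} ∩ {n | ∀ e ∈ G.CrossEdges A, χs n e = χ e} ∈ UU :=
      Filter.inter_mem (hFU _ hKfin) (hagreeW _ hKfin)
    obtain ⟨n, hn1, hn2⟩ := Filter.nonempty_of_mem hU1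
    obtain ⟨⟨e, heK, heχ⟩, _⟩ := hcut n A hA hA' hn1
    refine ⟨e, ?_, heK⟩
    show χ e = true
    rw [← hn2 e heK]
    exact heχ
  · intro A hA hA' hKfin
    have hU1 : {n | G.CrossEdges A ⊆ F n} ∩ {n | ∀ e ∈ G.CrossEdges A, χs n e = χ e} ∈ UU :=
      Filter.inter_mem (hFU _ hKfin) (hagreeW _ hKfin)
    obtain ⟨n, hn1, hn2⟩ := Filter.nonempty_of_mem hU1
    obtain ⟨_, ⟨e, heK, heχ⟩⟩ := hcut n A hA hA' hn1
    refine ⟨e, ?_, heK⟩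
    show χ e = false
    rw [← hn2 e heK]
    exact heχ
  · intro v
    have hI := hloc v
    have hU1 : {n | G.incEdges Set.univ v ⊆ F n} ∩
        {n | ∀ e ∈ G.incEdges Set.univ v, χs n e = χ e} ∈ UU :=
      Filter.inter_mem (hFU _ hI) (hagreeW _ hI)
    obtain ⟨n, hn1, hn2⟩ := Filter.nonempty_of_mem hU1
    have hbal := hdeg n v hn1
    have h1e : {e | e ∈ G.incEdges Set.univ v ∧ χs n e = true} = G.incEdges S1 v := by
      ext e
      constructor
      · rintro ⟨heI, heχ⟩
        refine ⟨?_, heI.2⟩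
        show χ e = true
        rw [← hn2 e heI]
        exact heχ
      · rintro ⟨heS, hev⟩
        have heI : e ∈ G.incEdges Set.univ v := ⟨Set.mem_univ e, hev⟩
        refine ⟨heI, ?_⟩
        rw [hn2 e heI]
        exact heS
    have h2e : {e | e ∈ G.incEdges Set.univ v ∧ χs n e = false} = G.incEdges S2 v := by
      ext e
      constructor
      · rintro ⟨heI, heχ⟩
        refine ⟨?_, heI.2⟩
        show χ e = false
        rw [← hn2 e heI]
        exact heχ
      · rintro ⟨heS, hev⟩
        have heI : e ∈ G.incEdges Set.univ v := ⟨Set.mem_univ e, hev⟩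
        refine ⟨heI, ?_⟩
        rw [hn2 e heI]
        exact heS
    refine ⟨hI.subset (fun e he => ⟨Set.mem_univ e, he.2⟩),
      hI.subset (fun e he => ⟨Set.mem_univ e, he.2⟩), ?_⟩
    show |((G.incEdges S1 v).ncard : ℤ) - ((G.incEdges S2 v).ncard : ℤ)| ≤ (c : ℤ)
    rw [← h1e, ← h2e]
    exact hbal

end Multigraph

end LF
section Split

open Multigraph

namespace MGSplit

variable {V E : Type*}

def Inf (G : Multigraph V E) (v : V) : Prop := (G.incEdges Set.univ v).Infinite

noncomputable def num (G : Multigraph V E) [Countable E] (v : {v : V // Inf G v}) :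
    ↥(G.incEdges Set.univ v.1) ≃ ℕ := by
  haveI := v.2.to_subtype
  letI := Classical.choice (nonempty_denumerable ↥(G.incEdges Set.univ v.1))
  exact Denumerable.eqv _

open Classical in
noncomputable def idx (G : Multigraph V E) [Countable E] (B : ℕ) (v : V) (e : E) : ℕ :=
  if h : Inf G v then
    (if he : e ∈ G.incEdges Set.univ v then (num G ⟨v, h⟩ ⟨e, he⟩) / B else 0)
  else 0

abbrev VS (G : Multigraph V E) : Type _ := {p : V × ℕ // Inf G p.1 ∨ p.2 = 0}
abbrev ES (G : Multigraph V E) : Type _ := E ⊕ ({v : V // Inf G v} × ℕ × Bool)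

lemma idx_not_inf (G : Multigraph V E) [Countable E] (B : ℕ) {v : V} (h : ¬ Inf G v) (e : E) :
    idx G B v e = 0 := by
  rw [idx, dif_neg h]

lemma idx_eq (G : Multigraph V E) [Countable E] (B : ℕ) {v : V} (h : Inf G v) {e : E}
    (he : e ∈ G.incEdges Set.univ v) :
    idx G B v e = (num G ⟨v, h⟩ ⟨e, he⟩) / B := by
  rw [idx, dif_pos h, dif_pos he]

noncomputable def ψ (G : Multigraph V E) [Countable E] (B : ℕ) (e : E) (v : V) : VS G :=
  ⟨(v, idx G B v e), by
    by_cases h : Inf G v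
    · exact Or.inl h
    · exact Or.inr (idx_not_inf G B h e)⟩

lemma ψ_inj (G : Multigraph V E) [Countable E] (B : ℕ) (e : E) :
    Function.Injective (ψ G B e) := by
  intro a b hab
  exact congrArg (fun x => x.1.1) hab

def rv (G : Multigraph V E) (v : {v : V // Inf G v}) (k : ℕ) : VS G := ⟨(v.1, k), Or.inl v.2⟩

def base (G : Multigraph V E) (v : V) : VS G := ⟨(v, 0), Or.inr rfl⟩

lemma base_inj (G : Multigraph V E) : Function.Injective (base G) := by
  intro a b hab
  exact congrArg (fun x => x.1.1) hab

noncomputable def GS (G : Multigraph V E) [Countable E] (B : ℕ) : Multigraph (VS G) (ES G) where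
  ends := fun e' => match e' with
    | Sum.inl e => (G.ends e).map (ψ G B e)
    | Sum.inr (v, k, _) => s(rv G v k, rv G v (k+1))
  loopless := by
    rintro (e | ⟨v, k, b⟩) h
    · exact G.loopless e (sym2_isDiag_of_map (ψ_inj G B e) h)
    · rw [Sym2.mk_isDiag_iff] at h
      have := congrArg (fun x => x.1.2) h
      simp [rv] at this

lemma gs_ends_inl (G : Multigraph V E) [Countable E] (B : ℕ) (e : E) :
    (GS G B).ends (Sum.inl e) = (G.ends e).map (ψ G B e) := rfl

lemma gs_ends_inr (G : Multigraph V E) [Countable E] (B : ℕ) (v : {v : V // Inf G v})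
    (k : ℕ) (b : Bool) :
    (GS G B).ends (Sum.inr (v, k, b)) = s(rv G v k, rv G v (k+1)) := rfl

end MGSplit

end Split
section Split2

open Multigraph

namespace MGSplit

variable {V E : Type*}

lemma blk_eq (G : Multigraph V E) [Countable E] (B : ℕ) (hB : 0 < B) {v : V}
    (h : Inf G v) (k : ℕ) :
    {e | e ∈ G.incEdges Set.univ v ∧ idx G B v e = k} =
      (fun j => ((num G ⟨v, h⟩).symm j).1) '' (Set.Ico (B*k) (B*k+B)) := by
  ext e
  constructor
  · rintro ⟨he, hidx⟩
    refine ⟨num G ⟨v, h⟩ ⟨e, he⟩, ?_, by simp⟩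
    rw [idx_eq G B h he] at hidx
    have h1 : k * B ≤ num G ⟨v, h⟩ ⟨e, he⟩ := (Nat.le_div_iff_mul_le hB).mp hidx.ge
    have h2 : (num G ⟨v, h⟩ ⟨e, he⟩ : ℕ) < (k+1) * B :=
      (Nat.div_lt_iff_lt_mul hB).mp (by omega)
    rw [Nat.succ_mul] at h2
    simp only [Set.mem_Ico]
    rw [mul_comm B k]
    exact ⟨h1, h2⟩
  · rintro ⟨j, hj, rfl⟩
    set ee := (num G ⟨v, h⟩).symm j with heedef
    have he : ee.1 ∈ G.incEdges Set.univ v := ee.2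
    refine ⟨he, ?_⟩
    rw [idx_eq G B h he]
    have heq : (⟨ee.1, he⟩ : ↥(G.incEdges Set.univ v)) = ee := rfl
    rw [heq, heedef, Equiv.apply_symm_apply]
    simp only [Set.mem_Ico] at hj
    refine Nat.div_eq_of_lt_le ?_ ?_
    · rw [mul_comm]; exact hj.1
    · rw [Nat.succ_mul, mul_comm]; exact hj.2

lemma blk_ncard (G : Multigraph V E) [Countable E] (B : ℕ) (hB : 0 < B) {v : V}
    (h : Inf G v) (k : ℕ) :
    {e | e ∈ G.incEdges Set.univ v ∧ idx G B v e = k}.ncard = B := by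
  rw [blk_eq G B hB h k]
  have hinj : Function.Injective (fun j : ℕ => ((num G ⟨v, h⟩).symm j).1) :=
    fun a b hab => (num G ⟨v, h⟩).symm.injective (Subtype.ext hab)
  rw [Set.ncard_image_of_injective _ hinj]
  rw [← Finset.coe_Ico, Set.ncard_coe_finset, Nat.card_Ico]
  omega

lemma blk_finite (G : Multigraph V E) [Countable E] (B : ℕ) (hB : 0 < B) (v : V) (k : ℕ) :
    {e | e ∈ G.incEdges Set.univ v ∧ idx G B v e = k}.Finite := by
  by_cases h : Inf G v
  · rw [blk_eq G B hB h k]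
    exact (Set.finite_Ico _ _).image _
  · exact (Set.not_infinite.mp h).subset (fun e he => he.1)

lemma rail_finite (G : Multigraph V E) (v : V) (k : ℕ) :
    {r : {v : V // Inf G v} × ℕ × Bool | r.1.1 = v ∧ (r.2.1 = k ∨ r.2.1 + 1 = k)}.Finite := by
  by_cases h : Inf G v
  · refine Set.Finite.subset (Set.toFinite
      {(⟨v, h⟩, k, true), (⟨v, h⟩, k, false), (⟨v, h⟩, k-1, true), (⟨v, h⟩, k-1, false)}) ?_
    rintro ⟨w, j, b⟩ ⟨hw, hj⟩
    have hw' : w = ⟨v, h⟩ := Subtype.ext hw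
    simp only [Set.mem_insert_iff, Set.mem_singleton_iff, Prod.mk.injEq]
    rcases hj with hj | hj
    · cases b
      · right; left; exact ⟨hw', hj, rfl⟩
      · left; exact ⟨hw', hj, rfl⟩
    · have hj2 : j + 1 = k := hj
      have hj' : j = k - 1 := by omega
      cases b
      · right; right; right; exact ⟨hw', hj', rfl⟩
      · right; right; left; exact ⟨hw', hj', rfl⟩
  · have hemp : {r : {v : V // Inf G v} × ℕ × Bool | r.1.1 = v ∧ (r.2.1 = k ∨ r.2.1 + 1 = k)} = ∅ := by
      ext ⟨w, j, b⟩
      simp only [Set.mem_setOf_eq, Set.mem_empty_iff_false, iff_false, not_and]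
      intro hw
      exact absurd (hw ▸ w.2) h
    rw [hemp]
    exact Set.finite_empty

end MGSplit

end Split2
section Split3

open Multigraph

namespace MGSplit

variable {V E : Type*}

lemma gs_inc_sub (G : Multigraph V E) [Countable E] (B : ℕ) (S' : Set (ES G))
    {v : V} {k : ℕ} (hx : Inf G v ∨ k = 0) :
    (GS G B).incEdges S' ⟨(v, k), hx⟩ ⊆
      Sum.inl '' {e | e ∈ G.incEdges Set.univ v ∧ idx G B v e = k} ∪
      Sum.inr '' {r : {v : V // Inf G v} × ℕ × Bool | r.1.1 = v ∧ (r.2.1 = k ∨ r.2.1 + 1 = k)} := by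
  rintro (e | ⟨w, j, b⟩) ⟨-, hmem⟩
  · left
    rw [gs_ends_inl, Sym2.mem_map] at hmem
    obtain ⟨u, hu, hue⟩ := hmem
    have h1 : u = v := congrArg (fun y => y.1.1) hue
    have h2 : idx G B u e = k := congrArg (fun y => y.1.2) hue
    subst h1
    exact ⟨e, ⟨⟨Set.mem_univ e, hu⟩, h2⟩, rfl⟩
  · right
    rw [gs_ends_inr, Sym2.mem_iff] at hmem
    refine ⟨(w, j, b), ?_, rfl⟩
    rcases hmem with hm | hm
    · exact ⟨congrArg (fun y => y.1.1) hm.symm, Or.inl (congrArg (fun y => y.1.2) hm.symm)⟩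
    · exact ⟨congrArg (fun y => y.1.1) hm.symm, Or.inr (congrArg (fun y => y.1.2) hm.symm)⟩

lemma gs_locfin (G : Multigraph V E) [Countable E] (B : ℕ) (hB : 0 < B) (x : VS G) :
    ((GS G B).incEdges Set.univ x).Finite := by
  obtain ⟨⟨v, k⟩, hx⟩ := x
  refine Set.Finite.subset (Set.Finite.union
    ((blk_finite G B hB v k).image Sum.inl)
    ((rail_finite G v k).image Sum.inr)) (gs_inc_sub G B Set.univ hx)

lemma gs_rail_reach (G : Multigraph V E) [Countable E] (B : ℕ)
    (w : {v : V // Inf G v}) (b : Bool) (k : ℕ) :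
    (GS G B).Reachable (Sum.inr '' {r : {v : V // Inf G v} × ℕ × Bool | r.2.2 = b})
      (rv G w k) (rv G w 0) := by
  induction k with
  | zero => exact Relation.ReflTransGen.refl
  | succ k ih =>
    refine Relation.ReflTransGen.head ⟨Sum.inr (w, k, b), ⟨(w, k, b), rfl, rfl⟩, ?_⟩ ih
    rw [gs_ends_inr, Sym2.eq_swap]

lemma gs_conn (G : Multigraph V E) [Countable E] (B : ℕ) {T : Set E}
    (hT : G.Connected T) (b : Bool) :
    (GS G B).Connected (Sum.inl '' T ∪ Sum.inr '' {r : {v : V // Inf G v} × ℕ × Bool | r.2.2 = b}) := by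
  set C : Set (ES G) := Sum.inl '' T ∪ Sum.inr '' {r : {v : V // Inf G v} × ℕ × Bool | r.2.2 = b}
    with hC
  have hrail : ∀ (w : {v : V // Inf G v}) (k : ℕ),
      (GS G B).Reachable C (rv G w k) (rv G w 0) :=
    fun w k => (GS G B).reachable_mono Set.subset_union_right (gs_rail_reach G B w b k)
  have hcopy : ∀ (e : E) (v : V), (GS G B).Reachable C (ψ G B e v) (base G v) := by
    intro e v
    by_cases h : Inf G v
    · have h1 : ψ G B e v = rv G ⟨v, h⟩ (idx G B v e) := Subtype.ext rfl
      have h2 : base G v = rv G ⟨v, h⟩ 0 := Subtype.ext rfl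
      rw [h1, h2]
      exact hrail ⟨v, h⟩ (idx G B v e)
    · have h1 : ψ G B e v = base G v := Subtype.ext (by
        show (v, idx G B v e) = (v, 0)
        rw [idx_not_inf G B h e])
      rw [h1]
      exact Relation.ReflTransGen.refl
  have hbase : ∀ v w : V, (GS G B).Reachable C (base G v) (base G w) := by
    intro v w
    have h := hT v w
    induction h with
    | refl => exact Relation.ReflTransGen.refl
    | @tail m y hr hadj ih =>
      obtain ⟨e, heT, hee⟩ := hadj
      have hstep : (GS G B).Adj C (ψ G B e m) (ψ G B e y) :=
        ⟨Sum.inl e, Or.inl ⟨e, heT, rfl⟩, by rw [gs_ends_inl, hee, Sym2.map_pair_eq]⟩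
      refine Relation.ReflTransGen.trans ih ?_
      refine Relation.ReflTransGen.trans ((GS G B).reachable_symm (hcopy e m)) ?_
      exact Relation.ReflTransGen.head hstep (hcopy e y)
  intro x y
  have hx : (GS G B).Reachable C x (base G x.1.1) := by
    obtain ⟨⟨v, k⟩, hvk⟩ := x
    rcases hvk with h | h
    · have h1 : (⟨(v, k), Or.inl h⟩ : VS G) = rv G ⟨v, h⟩ k := rfl
      have h2 : base G v = rv G ⟨v, h⟩ 0 := Subtype.ext rfl
      rw [h2]
      exact hrail ⟨v, h⟩ k
    · have : (⟨(v, k), Or.inr h⟩ : VS G) = base G v := Subtype.ext (by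
        show (v, k) = (v, 0)
        rw [show k = 0 from h])
      rw [this]
      exact Relation.ReflTransGen.refl
  have hy : (GS G B).Reachable C y (base G y.1.1) := by
    obtain ⟨⟨v, k⟩, hvk⟩ := y
    rcases hvk with h | h
    · have h2 : base G v = rv G ⟨v, h⟩ 0 := Subtype.ext rfl
      rw [h2]
      exact hrail ⟨v, h⟩ k
    · have : (⟨(v, k), Or.inr h⟩ : VS G) = base G v := Subtype.ext (by
        show (v, k) = (v, 0)
        rw [show k = 0 from h])
      rw [this]
      exact Relation.ReflTransGen.refl
  exact Relation.ReflTransGen.trans hx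
    (Relation.ReflTransGen.trans (hbase x.1.1 y.1.1) ((GS G B).reachable_symm hy))

end MGSplit

end Split3
section Split4

open Multigraph

namespace MGSplit

variable {V E : Type*}

lemma gs_cross (G : Multigraph V E) [Countable E] (B : ℕ) (A : Set V) :
    (GS G B).CrossEdges {x : VS G | x.1.1 ∈ A} = Sum.inl '' G.CrossEdges A := by
  ext e'
  constructor
  · rintro ⟨a', ha', b', hb', hee⟩
    match e' with
    | Sum.inl e =>
      obtain ⟨x, y, hxy⟩ := sym2_exists_rep (G.ends e)
      rw [gs_ends_inl, hxy, Sym2.map_pair_eq] at hee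
      rcases Sym2.eq_iff.mp hee with ⟨h1, h2⟩ | ⟨h1, h2⟩
      · refine ⟨e, ⟨x, ?_, y, ?_, hxy⟩, rfl⟩
        · have : (ψ G B e x).1.1 ∈ A := h1 ▸ ha'
          exact this
        · intro hyA
          exact (h2 ▸ hb') (hyA : (ψ G B e y).1.1 ∈ A)
      · refine ⟨e, ⟨y, ?_, x, ?_, by rw [hxy, Sym2.eq_swap]⟩, rfl⟩
        · have : (ψ G B e y).1.1 ∈ A := h2 ▸ ha'
          exact this
        · intro hxA
          exact (h1 ▸ hb') (hxA : (ψ G B e x).1.1 ∈ A)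
    | Sum.inr (w, j, b) =>
      exfalso
      rw [gs_ends_inr] at hee
      rcases Sym2.eq_iff.mp hee with ⟨h1, h2⟩ | ⟨h1, h2⟩
      · have ha2 : a'.1.1 = w.1 := by rw [← h1]; rfl
        have hb2 : b'.1.1 = w.1 := by rw [← h2]; rfl
        rw [Set.mem_setOf_eq, ha2] at ha'
        exact hb' (by rw [Set.mem_setOf_eq, hb2]; exact ha')
      · have ha2 : a'.1.1 = w.1 := by rw [← h2]; rfl
        have hb2 : b'.1.1 = w.1 := by rw [← h1]; rfl
        rw [Set.mem_setOf_eq, ha2] at ha'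
        exact hb' (by rw [Set.mem_setOf_eq, hb2]; exact ha')
  · rintro ⟨e, ⟨x, hx, y, hy, hxy⟩, rfl⟩
    exact ⟨ψ G B e x, hx, ψ G B e y, hy, by rw [gs_ends_inl, hxy, Sym2.map_pair_eq]⟩

lemma gs_inc_base (G : Multigraph V E) [Countable E] (B : ℕ) {v : V} (h : ¬ Inf G v)
    (S' : Set (ES G)) :
    (GS G B).incEdges S' (base G v) = Sum.inl '' {e | Sum.inl e ∈ S' ∧ v ∈ G.ends e} := by
  ext e'
  constructor
  · rintro ⟨hS, hmem⟩
    match e' with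
    | Sum.inl e =>
      rw [gs_ends_inl, Sym2.mem_map] at hmem
      obtain ⟨u, hu, hue⟩ := hmem
      have h1 : u = v := congrArg (fun y => y.1.1) hue
      subst h1
      exact ⟨e, ⟨hS, hu⟩, rfl⟩
    | Sum.inr (w, j, b) =>
      exfalso
      rw [gs_ends_inr, Sym2.mem_iff] at hmem
      rcases hmem with hm | hm
      · exact h ((congrArg (fun y => y.1.1) hm : v = w.1) ▸ w.2)
      · exact h ((congrArg (fun y => y.1.1) hm : v = w.1) ▸ w.2)
  · rintro ⟨e, ⟨hS, hv⟩, rfl⟩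
    refine ⟨hS, ?_⟩
    rw [gs_ends_inl, Sym2.mem_map]
    refine ⟨v, hv, Subtype.ext ?_⟩
    show (v, idx G B v e) = (v, 0)
    rw [idx_not_inf G B h e]

lemma rail_ncard_le (G : Multigraph V E) (v : V) (k : ℕ) :
    {r : {v : V // Inf G v} × ℕ × Bool | r.1.1 = v ∧ (r.2.1 = k ∨ r.2.1 + 1 = k)}.ncard ≤ 4 := by
  by_cases h : Inf G v
  · refine le_trans (Set.ncard_le_ncard ?_ (Set.toFinite
      {(⟨v, h⟩, k, true), (⟨v, h⟩, k, false), (⟨v, h⟩, k-1, true), (⟨v, h⟩, k-1, false)})) ?_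
    · rintro ⟨w, j, b⟩ ⟨hw, hj⟩
      have hw' : w = ⟨v, h⟩ := Subtype.ext hw
      simp only [Set.mem_insert_iff, Set.mem_singleton_iff, Prod.mk.injEq]
      rcases hj with hj | hj
      · cases b
        · right; left; exact ⟨hw', hj, rfl⟩
        · left; exact ⟨hw', hj, rfl⟩
      · have hj2 : j + 1 = k := hj
        have hj' : j = k - 1 := by omega
        cases b
        · right; right; right; exact ⟨hw', hj', rfl⟩
        · right; right; left; exact ⟨hw', hj', rfl⟩
    · refine le_trans (Set.ncard_insert_le _ _) ?_
      refine le_trans (Nat.add_le_add_right (Set.ncard_insert_le _ _) 1) ?_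
      refine le_trans (Nat.add_le_add_right (Nat.add_le_add_right (Set.ncard_insert_le _ _) 1) 1) ?_
      simp [Set.ncard_singleton]
  · have hemp : {r : {v : V // Inf G v} × ℕ × Bool | r.1.1 = v ∧ (r.2.1 = k ∨ r.2.1 + 1 = k)} = ∅ := by
      ext ⟨w, j, b⟩
      simp only [Set.mem_setOf_eq, Set.mem_empty_iff_false, iff_false, not_and]
      intro hw
      exact absurd (hw ▸ w.2) h
    rw [hemp]
    simp

end MGSplit

end Split4

/-- **Theorem (Statement 4).** -/
theorem infinite_general_semiconnected_balanced (c : ℕ)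
    (hc : IsLeast {c' : ℕ | FinContainsDoubleTreeBalanced c'} c)
    {V E : Type*} [Countable V] [Infinite V] [Countable E]
    (G : Multigraph V E)
    (hG : ∃ T1 T2 : Set E, Disjoint T1 T2 ∧ G.IsSpanningTree T1 ∧ G.IsSpanningTree T2) :
    ∃ S1 S2 : Set E, S1 ∪ S2 = Set.univ ∧ Disjoint S1 S2 ∧
      G.Semiconnected S1 ∧ G.Semiconnected S2 ∧
      G.BalancedOrInfinite c S1 S2 := by
  classical
  obtain ⟨T1, T2, hdT, hT1, hT2⟩ := hG
  set B : ℕ := c + 16 with hBdef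
  have hB : 0 < B := by omega
  haveI : Infinite (MGSplit.VS G) :=
    Infinite.of_injective (MGSplit.base G) (MGSplit.base_inj G)
  set C1' : Set (MGSplit.ES G) :=
    Sum.inl '' T1 ∪ Sum.inr '' {r : {v : V // MGSplit.Inf G v} × ℕ × Bool | r.2.2 = true}
    with hC1'
  set C2' : Set (MGSplit.ES G) :=
    Sum.inl '' T2 ∪ Sum.inr '' {r : {v : V // MGSplit.Inf G v} × ℕ × Bool | r.2.2 = false}
    with hC2'
  have hdisj' : Disjoint C1' C2' := by
    rw [Set.disjoint_left]
    rintro e' (⟨e, he, rfl⟩ | ⟨r, hr, rfl⟩)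
    · rintro (⟨f, hf, hfe⟩ | ⟨s, hs, hse⟩)
      · have hfe' : f = e := Sum.inl_injective hfe
        exact (Set.disjoint_left.mp hdT) he (hfe' ▸ hf)
      · exact Sum.inr_ne_inl hse
    · rintro (⟨f, hf, hfe⟩ | ⟨s, hs, hse⟩)
      · exact Sum.inr_ne_inl hfe.symm
      · have hsr : s = r := Sum.inr_injective hse
        rw [Set.mem_setOf_eq] at hr hs
        rw [hsr, hr] at hs
        simp at hs
  have hc1' := MGSplit.gs_conn G B hT1.1 true
  have hc2' := MGSplit.gs_conn G B hT2.1 false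
  obtain ⟨S1', S2', hun', hdis', hsc1', hsc2', hbal'⟩ :=
    (MGSplit.GS G B).lf_main hc.1 (MGSplit.gs_locfin G B hB) hdisj' hc1' hc2'
  set S1 : Set E := Sum.inl ⁻¹' S1' with hS1def
  set S2 : Set E := Sum.inl ⁻¹' S2' with hS2def
  have hmemun : ∀ e' : MGSplit.ES G, e' ∈ S1' ∨ e' ∈ S2' := by
    intro e'
    have : e' ∈ S1' ∪ S2' := by rw [hun']; trivial
    exact this
  refine ⟨S1, S2, ?_, ?_, ?_, ?_, ?_⟩
  · ext e
    simp only [Set.mem_union, Set.mem_univ, iff_true]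
    exact hmemun (Sum.inl e)
  · rw [Set.disjoint_left]
    intro e he1 he2
    exact (Set.disjoint_left.mp hdis') he1 he2
  · -- Semiconnected S1
    intro A hA hA' hKfin
    have hA1 : ({x : MGSplit.VS G | x.1.1 ∈ A}).Nonempty := by
      obtain ⟨a, ha⟩ := hA
      exact ⟨MGSplit.base G a, ha⟩
    have hA2 : ({x : MGSplit.VS G | x.1.1 ∈ A}ᶜ).Nonempty := by
      obtain ⟨b, hb⟩ := hA'
      exact ⟨MGSplit.base G b, hb⟩
    have hKfin' : ((MGSplit.GS G B).CrossEdges {x : MGSplit.VS G | x.1.1 ∈ A}).Finite := by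
      rw [MGSplit.gs_cross]
      exact hKfin.image _
    obtain ⟨e', he'S, he'K⟩ := hsc1' _ hA1 hA2 hKfin'
    rw [MGSplit.gs_cross] at he'K
    obtain ⟨e, heK, rfl⟩ := he'K
    exact ⟨e, he'S, heK⟩
  · -- Semiconnected S2
    intro A hA hA' hKfin
    have hA1 : ({x : MGSplit.VS G | x.1.1 ∈ A}).Nonempty := by
      obtain ⟨a, ha⟩ := hA
      exact ⟨MGSplit.base G a, ha⟩
    have hA2 : ({x : MGSplit.VS G | x.1.1 ∈ A}ᶜ).Nonempty := by
      obtain ⟨b, hb⟩ := hA'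
      exact ⟨MGSplit.base G b, hb⟩
    have hKfin' : ((MGSplit.GS G B).CrossEdges {x : MGSplit.VS G | x.1.1 ∈ A}).Finite := by
      rw [MGSplit.gs_cross]
      exact hKfin.image _
    obtain ⟨e', he'S, he'K⟩ := hsc2' _ hA1 hA2 hKfin'
    rw [MGSplit.gs_cross] at he'K
    obtain ⟨e, heK, rfl⟩ := he'K
    exact ⟨e, he'S, heK⟩
  · -- BalancedOrInfinite
    have hclaim : ∀ (W W' : Set (MGSplit.ES G)), W ∪ W' = Set.univ →
        (∀ x : MGSplit.VS G, ((MGSplit.GS G B).incEdges W x).Finite ∧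
          ((MGSplit.GS G B).incEdges W' x).Finite ∧
          |((MGSplit.GS G B).deg W x : ℤ) - ((MGSplit.GS G B).deg W' x : ℤ)| ≤ (c : ℤ)) →
        ∀ (v : V) (h : MGSplit.Inf G v) (k : ℕ),
          ∃ e, (Sum.inl e ∈ W ∧ v ∈ G.ends e) ∧ MGSplit.idx G B v e = k := by
      intro W W' hun hbal v h k
      by_contra hno
      obtain ⟨hf1, hf2, hb⟩ := hbal (MGSplit.rv G ⟨v, h⟩ k)
      have hsub1 : (MGSplit.GS G B).incEdges W (MGSplit.rv G ⟨v, h⟩ k) ⊆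
          Sum.inr '' {r : {v : V // MGSplit.Inf G v} × ℕ × Bool |
            r.1.1 = v ∧ (r.2.1 = k ∨ r.2.1 + 1 = k)} := by
        intro e' he'
        rcases MGSplit.gs_inc_sub G B W (Or.inl h) he' with ⟨e, ⟨heI, hidx⟩, rfl⟩ | hr
        · exact absurd ⟨e, ⟨he'.1, heI.2⟩, hidx⟩ hno
        · exact hr
      have hd1 : (MGSplit.GS G B).deg W (MGSplit.rv G ⟨v, h⟩ k) ≤ 4 := by
        refine le_trans (Set.ncard_le_ncard hsub1 ((MGSplit.rail_finite G v k).image _)) ?_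
        rw [Set.ncard_image_of_injective _ Sum.inr_injective]
        exact MGSplit.rail_ncard_le G v k
      have hsub2 : Sum.inl '' {e | e ∈ G.incEdges Set.univ v ∧ MGSplit.idx G B v e = k} ⊆
          (MGSplit.GS G B).incEdges W' (MGSplit.rv G ⟨v, h⟩ k) := by
        rintro e' ⟨e, ⟨heI, hidx⟩, rfl⟩
        have hW' : Sum.inl e ∈ W' := by
          have hmem : Sum.inl e ∈ W ∪ W' := by rw [hun]; trivial
          rcases hmem with hW | hW'
          · exact absurd ⟨e, ⟨hW, heI.2⟩, hidx⟩ hno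
          · exact hW'
        refine ⟨hW', ?_⟩
        rw [MGSplit.gs_ends_inl, Sym2.mem_map]
        refine ⟨v, heI.2, Subtype.ext ?_⟩
        show (v, MGSplit.idx G B v e) = (v, k)
        rw [hidx]
      have hd2 : B ≤ (MGSplit.GS G B).deg W' (MGSplit.rv G ⟨v, h⟩ k) := by
        have hle := Set.ncard_le_ncard hsub2 hf2
        rwa [Set.ncard_image_of_injective _ Sum.inl_injective,
          MGSplit.blk_ncard G B hB h k] at hle
      rw [abs_le] at hb
      have hBeq : B = c + 16 := hBdef
      unfold Multigraph.deg at hd1 hd2 hb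
      omega
    intro v
    by_cases h : MGSplit.Inf G v
    · left
      constructor
      · have hsel : ∀ k : ℕ, ∃ e, (Sum.inl e ∈ S1' ∧ v ∈ G.ends e) ∧ MGSplit.idx G B v e = k :=
          hclaim S1' S2' hun' hbal' v h
        choose f hf1 hf2 using hsel
        have hinj : Function.Injective f := by
          intro k1 k2 hk
          rw [← hf2 k1, ← hf2 k2, hk]
        refine Set.infinite_of_injective_forall_mem hinj ?_
        intro k
        exact ⟨(hf1 k).1, (hf1 k).2⟩
      · have hbal'' : ∀ x : MGSplit.VS G, ((MGSplit.GS G B).incEdges S2' x).Finite ∧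
            ((MGSplit.GS G B).incEdges S1' x).Finite ∧
            |((MGSplit.GS G B).deg S2' x : ℤ) - ((MGSplit.GS G B).deg S1' x : ℤ)| ≤ (c : ℤ) := by
          intro x
          obtain ⟨hx1, hx2, hx3⟩ := hbal' x
          exact ⟨hx2, hx1, by rw [abs_sub_comm]; exact hx3⟩
        have hsel : ∀ k : ℕ, ∃ e, (Sum.inl e ∈ S2' ∧ v ∈ G.ends e) ∧ MGSplit.idx G B v e = k :=
          hclaim S2' S1' (by rw [Set.union_comm]; exact hun') hbal'' v h
        choose f hf1 hf2 using hsel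
        have hinj : Function.Injective f := by
          intro k1 k2 hk
          rw [← hf2 k1, ← hf2 k2, hk]
        refine Set.infinite_of_injective_forall_mem hinj ?_
        intro k
        exact ⟨(hf1 k).1, (hf1 k).2⟩
    · right
      obtain ⟨hx1, hx2, hx3⟩ := hbal' (MGSplit.base G v)
      have he1 : (MGSplit.GS G B).incEdges S1' (MGSplit.base G v) =
          Sum.inl '' (G.incEdges S1 v) := by
        rw [MGSplit.gs_inc_base G B h S1']
        congr 1
      have he2 : (MGSplit.GS G B).incEdges S2' (MGSplit.base G v) =
          Sum.inl '' (G.incEdges S2 v) := by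
        rw [MGSplit.gs_inc_base G B h S2']
        congr 1
      rw [he1] at hx1
      rw [he2] at hx2
      have hf1 : (G.incEdges S1 v).Finite :=
        Set.Finite.of_finite_image hx1 Sum.inl_injective.injOn
      have hf2 : (G.incEdges S2 v).Finite :=
        Set.Finite.of_finite_image hx2 Sum.inl_injective.injOn
      refine ⟨hf1, hf2, ?_⟩
      have hd1 : G.deg S1 v = (MGSplit.GS G B).deg S1' (MGSplit.base G v) := by
        unfold Multigraph.deg
        rw [he1, Set.ncard_image_of_injective _ Sum.inl_injective]
      have hd2 : G.deg S2 v = (MGSplit.GS G B).deg S2' (MGSplit.base G v) := by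
        unfold Multigraph.deg
        rw [he2, Set.ncard_image_of_injective _ Sum.inl_injective]
      rw [hd1, hd2]
      exact hx3
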